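/- The real lattice Ψ(E_3) obtained from E_3 = {(x_1,x_2,x_3) ∈ Z[ω]^3 : x_1+x_2+x_3 ∈ (1+ω)Z[ω]} via the complex-to-real embedding of Q(ω) (sending each coordinate a+bω to the pair (a + b/2, b√3/2)) is equivalent, up to scaling and orthogonal transformation, to the dual root lattice E_6*. -/

import Mathlib

noncomputable def ω : ℂ := (1 + Real.sqrt 3 * Complex.I) / 2

def Zω : Set ℂ := {x | ∃ a b : ℤ, x = (a : ℂ) + (b : ℂ) * ω}

def idealω : Set ℂ := {x | ∃ z ∈ Zω, x = (1 + ω) * z}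

def Em (m : ℕ) : Set (Fin m → ℂ) :=
  {x | (∀ k, x k ∈ Zω) ∧ (∑ k, x k) ∈ idealω}

/-- The complex-to-real map Ψ : C³ → R⁶. -/
noncomputable def Psi3 (x : Fin 3 → ℂ) : Fin 6 → ℝ :=
  ![(x 0).re, (x 1).re, (x 2).re, (x 0).im, (x 1).im, (x 2).im]

/-- The complex form of the dual root lattice E₆*: the Z[ω]-span of the columns
(√-3,0,0), (1,-1,0), (1,0,-1). -/
noncomputable def E6starC : Set (Fin 3 → ℂ) :=
  {x | ∃ c : Fin 3 → ℂ, (∀ k, c k ∈ Zω) ∧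
    x = c 0 • ![Real.sqrt 3 * Complex.I, 0, 0] + c 1 • ![1, -1, 0] + c 2 • ![1, 0, -1]}

lemma hω2 : ω * ω = ω - 1 := by
  unfold ω
  have h : (Real.sqrt 3 : ℂ) * (Real.sqrt 3 : ℂ) * (Complex.I * Complex.I) = -3 := by
    rw [← Complex.ofReal_mul, Real.mul_self_sqrt (by norm_num), Complex.I_mul_I]
    norm_num
  linear_combination (1/4 : ℂ) * h

lemma sqrt3I_eq : (Real.sqrt 3 : ℂ) * Complex.I = 2 * ω - 1 := by
  unfold ω; ring

lemma Zω_add {x y : ℂ} (hx : x ∈ Zω) (hy : y ∈ Zω) : x + y ∈ Zω := by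
  obtain ⟨a, b, rfl⟩ := hx
  obtain ⟨c, d, rfl⟩ := hy
  exact ⟨a + c, b + d, by push_cast; ring⟩

lemma Zω_neg {x : ℂ} (hx : x ∈ Zω) : -x ∈ Zω := by
  obtain ⟨a, b, rfl⟩ := hx
  exact ⟨-a, -b, by push_cast; ring⟩

lemma Zω_mul {x y : ℂ} (hx : x ∈ Zω) (hy : y ∈ Zω) : x * y ∈ Zω := by
  obtain ⟨a, b, rfl⟩ := hx
  obtain ⟨c, d, rfl⟩ := hy
  refine ⟨a * c - b * d, a * d + b * c + b * d, ?_⟩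
  push_cast
  linear_combination ((b : ℂ) * d) * hω2

lemma sum3 (x : Fin 3 → ℂ) : (∑ k, x k) = x 0 + x 1 + x 2 := by
  simp [Fin.sum_univ_three]

lemma comb (c0 c1 c2 : ℂ) :
    c0 • ![(Real.sqrt 3 : ℂ) * Complex.I, 0, 0] + c1 • ![1, -1, 0] + c2 • ![1, 0, -1]
      = ![c0 * (2 * ω - 1) + c1 + c2, -c1, -c2] := by
  funext k
  fin_cases k <;> simp [sqrt3I_eq]

lemma EmEq : Em 3 = E6starC := by
  have hω_mem : (2 * ω - 1 : ℂ) ∈ Zω := ⟨-1, 2, by push_cast; ring⟩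
  ext x
  constructor
  · rintro ⟨hmem, z, hz, hsum⟩
    rw [sum3] at hsum
    refine ⟨![(1 - ω) * z, -x 1, -x 2], ?_, ?_⟩
    · intro k
      fin_cases k
      · exact Zω_mul ⟨1, -1, by push_cast; ring⟩ hz
      · exact Zω_neg (hmem 1)
      · exact Zω_neg (hmem 2)
    · have := comb ((1 - ω) * z) (-(x 1)) (-(x 2))
      simp only [Matrix.cons_val_zero, Matrix.cons_val_one, Matrix.head_cons,
        Matrix.cons_val_two, Matrix.tail_cons] at this ⊢
      rw [this]
      funext k
      fin_cases k
      · show x 0 = (1 - ω) * z * (2 * ω - 1) + -(x 1) + -(x 2)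
        linear_combination hsum + 2 * z * hω2
      · show x 1 = - -(x 1); ring
      · show x 2 = - -(x 2); ring
  · rintro ⟨c, hc, rfl⟩
    rw [comb]
    have e0 : (![c 0 * (2 * ω - 1) + c 1 + c 2, -(c 1), -(c 2)] : Fin 3 → ℂ) 0
        = c 0 * (2 * ω - 1) + c 1 + c 2 := rfl
    have e1 : (![c 0 * (2 * ω - 1) + c 1 + c 2, -(c 1), -(c 2)] : Fin 3 → ℂ) 1 = -(c 1) := rfl
    have e2 : (![c 0 * (2 * ω - 1) + c 1 + c 2, -(c 1), -(c 2)] : Fin 3 → ℂ) 2 = -(c 2) := rfl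
    constructor
    · intro k
      fin_cases k
      · exact Zω_add (Zω_add (Zω_mul (hc 0) hω_mem) (hc 1)) (hc 2)
      · exact Zω_neg (hc 1)
      · exact Zω_neg (hc 2)
    · rw [sum3, e0, e1, e2]
      refine ⟨ω * c 0, Zω_mul ⟨0, 1, by push_cast; ring⟩ (hc 0), ?_⟩
      linear_combination (-(c 0)) * hω2

/-- Ψ(E₃) is equivalent, up to scaling and orthogonal transformation, to E₆*. -/
theorem stmt10 :
    ∃ r : ℝ, 0 < r ∧
    ∃ f : (Fin 6 → ℝ) ≃ₗ[ℝ] (Fin 6 → ℝ),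
      (∀ x y : Fin 6 → ℝ, ∑ k, f x k * f y k = ∑ k, x k * y k) ∧
      f '' ((fun z => r • z) '' (Psi3 '' Em 3)) = Psi3 '' E6starC := by
  refine ⟨1, one_pos, LinearEquiv.refl ℝ _, fun x y => rfl, ?_⟩
  have : (fun z : Fin 6 → ℝ => (1 : ℝ) • z) = id := by
    funext z; simp
  simp [this, EmEq, Set.image_id, (show ⇑(LinearEquiv.refl ℝ (Fin 6 → ℝ)) = id from rfl)]
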